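/- Assume the standing hypotheses with $C_{\phi,w}$ densely defined, and let $\alpha\in(0,1]$. Then $C_{\phi,w}$ is quasinormal (equivalently, $\mathsf{h}_{\phi,w}\circ\phi = \mathsf{h}_{\phi,w}$ a.e. $[\mu_w]$) if and only if the $\alpha$-Aluthge transform satisfies $\Delta_\alpha(C_{\phi,w}) = C_{\phi,w}$ (as an equality of unbounded operators, including domains). -/

import Mathlib

open MeasureTheory ENNReal NNReal Filter Topology

variable {X : Type*} [MeasurableSpace X]

/-- The measure `μ_w` with density `|w|²` with respect to `μ`. -/
noncomputable def wcMeasure (μ : Measure X) (w : X → ℂ) : Measure X :=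
  μ.withDensity fun x => (‖w x‖₊ : ℝ≥0∞) ^ 2

/-- The Radon–Nikodym derivative `h_{φ,w} = d(μ_w ∘ φ⁻¹)/dμ`. -/
noncomputable def wcDeriv (μ : Measure X) (w : X → ℂ) (φ : X → X) : X → ℝ≥0∞ :=
  ((wcMeasure μ w).map φ).rnDeriv μ

/-- The modified weight `w_α = w · (h_{φ,w}/(h_{φ,w}∘φ))^{α/2}` (interpreted a.e.). -/
noncomputable def wcAlpha (μ : Measure X) (w : X → ℂ) (φ : X → X) (α : ℝ) : X → ℂ :=
  fun x => w x * (((wcDeriv μ w φ x / wcDeriv μ w φ (φ x)) ^ (α / 2)).toReal : ℂ)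

/-- `E` is (a version of) the conditional expectation of the nonnegative function `f`
with respect to the σ-algebra `φ⁻¹(𝒜)` and the measure `ν`. -/
def IsCondExp (φ : X → X) (ν : Measure X) (f E : X → ℝ≥0∞) : Prop :=
  Measurable[MeasurableSpace.comap φ inferInstance] E ∧
    ∀ s : Set X, MeasurableSet s → ∫⁻ x in φ ⁻¹' s, E x ∂ν = ∫⁻ x in φ ⁻¹' s, f x ∂ν

/-- `g = E ∘ φ⁻¹`: the measurable function with `g ∘ φ = E` a.e. `[ν]`,
vanishing a.e. `[μ]` on the set where `h = 0`. -/
def IsQuot (φ : X → X) (μ ν : Measure X) (h : X → ℝ≥0∞) (E g : X → ℝ≥0∞) : Prop :=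
  Measurable g ∧ (∀ᵐ x ∂ν, g (φ x) = E x) ∧ (∀ᵐ x ∂μ, h x = 0 → g x = 0)

/-- `E` is (a version of) the conditional expectation of the complex function `f`
with respect to the σ-algebra `φ⁻¹(𝒜)` and the measure `ν`. -/
def IsCondExpC (φ : X → X) (ν : Measure X) (f E : X → ℂ) : Prop :=
  Measurable[MeasurableSpace.comap φ inferInstance] E ∧
    ∀ s : Set X, MeasurableSet s → ν (φ ⁻¹' s) < ⊤ →
      ∫ x in φ ⁻¹' s, E x ∂ν = ∫ x in φ ⁻¹' s, f x ∂ν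

/-- `f_w = χ_{{w ≠ 0}} f / w`. -/
noncomputable def fw (w f : X → ℂ) : X → ℂ := fun x => if w x = 0 then 0 else f x / w x

/-- The weight `w̃ = w/(h_{φ,w}∘φ)^{1/2}` of the partial isometry in the polar
decomposition `C_{φ,w} = U |C_{φ,w}|`, `U = C_{φ,w̃}`. -/
noncomputable def wcTilde (μ : Measure X) (w : X → ℂ) (φ : X → X) : X → ℂ :=
  fun x => w x * (((wcDeriv μ w φ (φ x)) ^ (-(1 / 2) : ℝ)).toReal : ℂ)

/-- The function `Δ_α(C_{φ,w}) f = |C_{φ,w}|^α U |C_{φ,w}|^{1-α} f`, computed via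
`|C_{φ,w}| = M_{h^{1/2}}` and `U = C_{φ,w̃}`. -/
noncomputable def aluthgeFun (μ : Measure X) (w : X → ℂ) (φ : X → X) (α : ℝ) (f : X → ℂ) :
    X → ℂ :=
  fun x => ((wcDeriv μ w φ x ^ (α / 2)).toReal : ℂ) *
    (wcTilde μ w φ x * (((wcDeriv μ w φ (φ x)) ^ ((1 - α) / 2)).toReal : ℂ) * f (φ x))

/-- Membership in the domain of the Aluthge transform
`Δ_α(C_{φ,w}) = |C_{φ,w}|^α U |C_{φ,w}|^{1-α}`. -/
noncomputable def aluthgeDom (μ : Measure X) (w : X → ℂ) (φ : X → X) (α : ℝ) (f : X → ℂ) :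
    Prop :=
  MemLp f 2 μ ∧
  MemLp (fun x => ((wcDeriv μ w φ x ^ ((1 - α) / 2)).toReal : ℂ) * f x) 2 μ ∧
  MemLp (fun x =>
    wcTilde μ w φ x * (((wcDeriv μ w φ (φ x)) ^ ((1 - α) / 2)).toReal : ℂ) * f (φ x)) 2 μ ∧
  MemLp (aluthgeFun μ w φ α f) 2 μ

/-! ### Auxiliary lemmas -/

section Aux

lemma measurable_wcDeriv (μ : Measure X) (w : X → ℂ) (φ : X → X) :
    Measurable (wcDeriv μ w φ) := Measure.measurable_rnDeriv _ _

lemma measurable_wcDensity {w : X → ℂ} (hw : Measurable w) :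
    Measurable fun x => (‖w x‖₊ : ℝ≥0∞) ^ 2 :=
  (hw.nnnorm.coe_nnreal_ennreal).pow_const 2

lemma wc_rep (μ : Measure X) [SigmaFinite μ] (w : X → ℂ) (φ : X → X)
    (habs : (wcMeasure μ w).map φ ≪ μ) :
    μ.withDensity (wcDeriv μ w φ) = (wcMeasure μ w).map φ := by
  haveI : SFinite (wcMeasure μ w) := by unfold wcMeasure; infer_instance
  exact Measure.withDensity_rnDeriv_eq _ _ habs

lemma memLp_two_iff (μ : Measure X) {f : X → ℂ} (hf : AEStronglyMeasurable f μ) :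
    MemLp f 2 μ ↔ ∫⁻ x, (‖f x‖₊ : ℝ≥0∞) ^ 2 ∂μ < ⊤ := by
  rw [MemLp, and_iff_right hf,
    eLpNorm_lt_top_iff_lintegral_rpow_enorm_lt_top (by norm_num) (by norm_num)]
  have h2 : ((2:ℝ≥0∞)).toReal = (2:ℝ) := by norm_num
  have heq : ∫⁻ a, (‖f a‖₊:ℝ≥0∞) ^ (2:ℝ) ∂μ = ∫⁻ a, (‖f a‖₊:ℝ≥0∞) ^ 2 ∂μ :=
    lintegral_congr fun x => by rw [← ENNReal.rpow_natCast]; norm_num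
  rw [h2]; exact Iff.of_eq (congrArg (· < ∞) heq)

lemma wc_change (μ : Measure X) [SigmaFinite μ] {w : X → ℂ} {φ : X → X}
    (hw : Measurable w) (hφ : Measurable φ) (habs : (wcMeasure μ w).map φ ≪ μ)
    {G : X → ℝ≥0∞} (hG : AEMeasurable G μ) :
    ∫⁻ x, (‖w x‖₊ : ℝ≥0∞) ^ 2 * G (φ x) ∂μ = ∫⁻ x, wcDeriv μ w φ x * G x ∂μ := by
  have h1 : AEMeasurable G ((wcMeasure μ w).map φ) := hG.mono_ac habs
  have h2 : AEMeasurable (fun x => G (φ x)) (wcMeasure μ w) :=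
    h1.comp_aemeasurable hφ.aemeasurable
  calc ∫⁻ x, (‖w x‖₊ : ℝ≥0∞) ^ 2 * G (φ x) ∂μ
      = ∫⁻ x, G (φ x) ∂(wcMeasure μ w) := by
        rw [wcMeasure, lintegral_withDensity_eq_lintegral_mul₀'
          (measurable_wcDensity hw).aemeasurable h2]
        rfl
    _ = ∫⁻ y, G y ∂((wcMeasure μ w).map φ) := (lintegral_map' h1 hφ.aemeasurable).symm
    _ = ∫⁻ y, G y ∂(μ.withDensity (wcDeriv μ w φ)) := by rw [wc_rep μ w φ habs]
    _ = ∫⁻ x, wcDeriv μ w φ x * G x ∂μ := by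
        rw [lintegral_withDensity_eq_lintegral_mul₀
          (measurable_wcDeriv μ w φ).aemeasurable hG]
        rfl

lemma wc_measure_preimage (μ : Measure X) [SigmaFinite μ] {w : X → ℂ} {φ : X → X}
    (hφ : Measurable φ) (habs : (wcMeasure μ w).map φ ≪ μ)
    {s : Set X} (hs : MeasurableSet s) :
    wcMeasure μ w (φ ⁻¹' s) = ∫⁻ x in s, wcDeriv μ w φ x ∂μ := by
  rw [← Measure.map_apply hφ hs, ← wc_rep μ w φ habs, withDensity_apply _ hs]

lemma ae_wc_iff (μ : Measure X) {w : X → ℂ} (hw : Measurable w) {p : X → Prop} :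
    (∀ᵐ x ∂wcMeasure μ w, p x) ↔ ∀ᵐ x ∂μ, w x ≠ 0 → p x := by
  rw [wcMeasure, ae_withDensity_iff (measurable_wcDensity hw)]
  exact eventually_congr (Eventually.of_forall fun x => by simp)

lemma wc_ptA {α : ℝ} (hα : α ∈ Set.Ioc (0:ℝ) 1) (b : ℝ≥0∞) :
    (b ^ (-(1/2) : ℝ)).toReal * (b ^ ((1 - α)/2)).toReal = (b ^ (-(α/2))).toReal := by
  rcases eq_or_ne b 0 with rfl | hb0
  · rw [ENNReal.zero_rpow_of_neg (show (-(1/2):ℝ) < 0 by norm_num),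
      ENNReal.zero_rpow_of_neg (show (-(α/2):ℝ) < 0 by linarith [hα.1])]
    simp
  rcases eq_or_ne b ⊤ with rfl | hbt
  · rw [ENNReal.top_rpow_of_neg (show (-(1/2):ℝ) < 0 by norm_num),
      ENNReal.top_rpow_of_neg (show (-(α/2):ℝ) < 0 by linarith [hα.1])]
    simp
  · rw [← ENNReal.toReal_mul, ← ENNReal.rpow_add _ _ hb0 hbt,
      show (-(1/2) : ℝ) + (1 - α)/2 = -(α/2) by ring]

lemma wc_rpow_sq (b : ℝ≥0∞) (e : ℝ) : (b ^ e) ^ 2 = b ^ (2 * e) := by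
  rw [← ENNReal.rpow_natCast (b ^ e) 2, ← ENNReal.rpow_mul, mul_comm]
  norm_num

lemma wc_rpow_le_one_add (e : ℝ≥0∞) {c : ℝ} (h0 : 0 ≤ c) (h1 : c ≤ 1) : e ^ c ≤ 1 + e := by
  rcases le_total e 1 with he | he
  · calc e ^ c ≤ 1 ^ c := ENNReal.rpow_le_rpow he h0
      _ = 1 := ENNReal.one_rpow _
      _ ≤ 1 + e := le_self_add
  · calc e ^ c ≤ e ^ (1:ℝ) := ENNReal.rpow_le_rpow_of_exponent_le he h1
      _ = e := ENNReal.rpow_one e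
      _ ≤ 1 + e := le_add_self

lemma wc_nsq (r : ℝ) (hr : 0 ≤ r) (z : ℂ) :
    ((‖(r : ℂ) * z‖₊ : ℝ≥0∞)) ^ 2 = (ENNReal.ofReal r) ^ 2 * (‖z‖₊ : ℝ≥0∞) ^ 2 := by
  rw [nnnorm_mul, ENNReal.coe_mul, mul_pow]
  congr 1
  rw [Complex.nnnorm_real]; exact congrArg (· ^ 2) (Real.enorm_eq_ofReal hr)

/-- Closed form of the term appearing in the third domain condition. -/
lemma wc_cf3 (μ : Measure X) (w : X → ℂ) (φ : X → X) {α : ℝ} (hα : α ∈ Set.Ioc (0:ℝ) 1)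
    (f : X → ℂ) (x : X) :
    wcTilde μ w φ x * (((wcDeriv μ w φ (φ x)) ^ ((1 - α) / 2)).toReal : ℂ) * f (φ x)
      = (((wcDeriv μ w φ (φ x) ^ (-(α/2) : ℝ)).toReal : ℂ)) * (w x * f (φ x)) := by
  rw [wcTilde, ← wc_ptA hα (wcDeriv μ w φ (φ x))]
  push_cast
  ring

/-- Closed form of `aluthgeFun`. -/
lemma wc_cf (μ : Measure X) (w : X → ℂ) (φ : X → X) {α : ℝ} (hα : α ∈ Set.Ioc (0:ℝ) 1)
    (f : X → ℂ) (x : X) :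
    aluthgeFun μ w φ α f x
      = ((wcDeriv μ w φ x ^ (α / 2)).toReal : ℂ) *
        ((((wcDeriv μ w φ (φ x) ^ (-(α/2) : ℝ)).toReal : ℂ)) * (w x * f (φ x))) := by
  rw [aluthgeFun, wc_cf3 μ w φ hα f x]

lemma wc_ae_ne_zero_comp (μ : Measure X) [SigmaFinite μ] {w : X → ℂ} {φ : X → X}
    (hφ : Measurable φ) (habs : (wcMeasure μ w).map φ ≪ μ) :
    ∀ᵐ x ∂wcMeasure μ w, wcDeriv μ w φ (φ x) ≠ 0 := by
  have hs : MeasurableSet {y | wcDeriv μ w φ y = 0} :=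
    measurable_wcDeriv μ w φ (measurableSet_singleton 0)
  have h0 : wcMeasure μ w (φ ⁻¹' {y | wcDeriv μ w φ y = 0}) = 0 := by
    rw [wc_measure_preimage μ hφ habs hs]
    calc ∫⁻ x in {y | wcDeriv μ w φ y = 0}, wcDeriv μ w φ x ∂μ
        = ∫⁻ _ in {y | wcDeriv μ w φ y = 0}, 0 ∂μ :=
          setLIntegral_congr_fun hs fun x hx => hx
      _ = 0 := lintegral_zero
  rw [ae_iff]
  convert h0 using 2
  ext x
  simp [Set.mem_preimage]

lemma wc_ae_ne_top_comp (μ : Measure X) [SigmaFinite μ] {w : X → ℂ} {φ : X → X}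
    (hφ : Measurable φ) (habs : (wcMeasure μ w).map φ ≪ μ)
    (hfin : ∀ᵐ x ∂μ, wcDeriv μ w φ x < ⊤) :
    ∀ᵐ x ∂wcMeasure μ w, wcDeriv μ w φ (φ x) ≠ ⊤ := by
  have hs : MeasurableSet {y | wcDeriv μ w φ y = ⊤} :=
    measurable_wcDeriv μ w φ (measurableSet_singleton ⊤)
  have hnull : μ {y | wcDeriv μ w φ y = ⊤} = 0 := by
    have := ae_iff.mp hfin
    convert this using 2
    ext x
    simp [lt_top_iff_ne_top]
  have h0 : wcMeasure μ w (φ ⁻¹' {y | wcDeriv μ w φ y = ⊤}) = 0 := by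
    rw [wc_measure_preimage μ hφ habs hs, Measure.restrict_eq_zero.mpr hnull,
      lintegral_zero_measure]
  rw [ae_iff]
  convert h0 using 2
  ext x
  simp [Set.mem_preimage]

end Aux

/-- `C_{φ,w}` is quasinormal (equivalently `h_{φ,w}∘φ = h_{φ,w}` a.e.
`[μ_w]`) iff `Δ_α(C_{φ,w}) = C_{φ,w}` as unbounded operators (equal domains and equal
action on the common domain). -/
theorem aluthge_wco_quasinormal_iff_fixed
    (μ : Measure X) [SigmaFinite μ] (w : X → ℂ) (φ : X → X)
    (hw : Measurable w) (hφ : Measurable φ)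
    (habs : (wcMeasure μ w).map φ ≪ μ)
    (hfin : ∀ᵐ x ∂μ, wcDeriv μ w φ x < ⊤)
    (α : ℝ) (hα : α ∈ Set.Ioc (0 : ℝ) 1) :
    (∀ᵐ x ∂(wcMeasure μ w), wcDeriv μ w φ (φ x) = wcDeriv μ w φ x) ↔
    ((∀ f : X → ℂ, aluthgeDom μ w φ α f ↔
        (MemLp f 2 μ ∧ MemLp (fun x => w x * f (φ x)) 2 μ)) ∧
      (∀ f : X → ℂ, aluthgeDom μ w φ α f →
        aluthgeFun μ w φ α f =ᵐ[μ] fun x => w x * f (φ x))) := by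
  obtain ⟨hα0, hα1⟩ := hα
  have hαmem : α ∈ Set.Ioc (0:ℝ) 1 := ⟨hα0, hα1⟩
  have hmac : wcMeasure μ w ≪ μ := withDensity_absolutelyContinuous μ _
  have hb0 : ∀ᵐ x ∂wcMeasure μ w, wcDeriv μ w φ (φ x) ≠ 0 := wc_ae_ne_zero_comp μ hφ habs
  have hbt : ∀ᵐ x ∂wcMeasure μ w, wcDeriv μ w φ (φ x) ≠ ⊤ := wc_ae_ne_top_comp μ hφ habs hfin
  have hat : ∀ᵐ x ∂wcMeasure μ w, wcDeriv μ w φ x ≠ ⊤ :=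
    (hfin.filter_mono hmac.ae_le).mono fun x hx => hx.ne
  have hgen : ∀ᵐ x ∂μ, w x ≠ 0 →
      (wcDeriv μ w φ (φ x) ≠ 0 ∧ wcDeriv μ w φ (φ x) ≠ ⊤ ∧ wcDeriv μ w φ x ≠ ⊤) := by
    refine (ae_wc_iff μ hw).1 ?_
    filter_upwards [hb0, hbt, hat] with x h1 h2 h3
    exact ⟨h1, h2, h3⟩
  constructor
  · -- quasinormal implies the Aluthge transform is fixed
    intro hqn
    have hqn' : ∀ᵐ x ∂μ, w x ≠ 0 →
        (wcDeriv μ w φ (φ x) = wcDeriv μ w φ x ∧ wcDeriv μ w φ x ≠ 0 ∧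
          wcDeriv μ w φ x ≠ ⊤) := by
      refine (ae_wc_iff μ hw).1 ?_
      filter_upwards [hqn, hb0, hat] with x h1 h2 h3
      exact ⟨h1, h1 ▸ h2, h3⟩
    have hact : ∀ f : X → ℂ, aluthgeFun μ w φ α f =ᵐ[μ] fun x => w x * f (φ x) := by
      intro f
      filter_upwards [hqn'] with x hx
      rw [wc_cf μ w φ hαmem f x]
      by_cases hwx : w x = 0
      · simp [hwx]
      · obtain ⟨heq, h0, ht⟩ := hx hwx
        rw [heq]
        have hone : ((wcDeriv μ w φ x ^ (α/2)).toReal : ℝ) *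
            ((wcDeriv μ w φ x ^ (-(α/2):ℝ)).toReal : ℝ) = 1 := by
          rw [← ENNReal.toReal_mul, ← ENNReal.rpow_add _ _ h0 ht,
            show (α/2) + -(α/2) = (0:ℝ) by ring, ENNReal.rpow_zero, ENNReal.toReal_one]
        calc ((wcDeriv μ w φ x ^ (α/2)).toReal : ℂ) *
              (((wcDeriv μ w φ x ^ (-(α/2):ℝ)).toReal : ℂ) * (w x * f (φ x)))
            = ((((wcDeriv μ w φ x ^ (α/2)).toReal *
                (wcDeriv μ w φ x ^ (-(α/2):ℝ)).toReal : ℝ)) : ℂ) * (w x * f (φ x)) := by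
              push_cast; ring
          _ = w x * f (φ x) := by rw [hone]; simp
    refine ⟨fun f => ⟨fun hd => ⟨hd.1, hd.2.2.2.ae_eq (hact f)⟩, fun hfd => ?_⟩,
      fun f _ => hact f⟩
    obtain ⟨hf, hwf⟩ := hfd
    have hfm : AEMeasurable (fun y => (‖f y‖₊ : ℝ≥0∞) ^ 2) μ := hf.1.enorm.pow_const 2
    have hIwf : ∫⁻ x, (‖w x * f (φ x)‖₊ : ℝ≥0∞) ^ 2 ∂μ < ⊤ := (memLp_two_iff μ hwf.1).1 hwf
    have hIh : ∫⁻ x, wcDeriv μ w φ x * (‖f x‖₊:ℝ≥0∞) ^ 2 ∂μ < ⊤ := by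
      rw [← wc_change μ hw hφ habs hfm]
      refine lt_of_le_of_lt (le_of_eq (lintegral_congr fun x => ?_)) hIwf
      rw [nnnorm_mul]; push_cast; ring
    have hIf : ∫⁻ x, (‖f x‖₊:ℝ≥0∞) ^ 2 ∂μ < ⊤ := (memLp_two_iff μ hf.1).1 hf
    have hbound : ∫⁻ x, (1 + wcDeriv μ w φ x) * (‖f x‖₊:ℝ≥0∞) ^ 2 ∂μ < ⊤ := by
      have heq : ∀ x, (1 + wcDeriv μ w φ x) * (‖f x‖₊:ℝ≥0∞) ^ 2
          = (‖f x‖₊:ℝ≥0∞) ^ 2 + wcDeriv μ w φ x * (‖f x‖₊:ℝ≥0∞) ^ 2 := fun x => by ring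
      simp_rw [heq]
      rw [lintegral_add_left' hfm]
      exact ENNReal.add_lt_top.2 ⟨hIf, hIh⟩
    have hmeas2 : Measurable fun x => (((wcDeriv μ w φ x ^ ((1 - α)/2)).toReal : ℝ) : ℂ) :=
      Complex.measurable_ofReal.comp
        (((measurable_wcDeriv μ w φ).pow measurable_const).ennreal_toReal)
    have hd2 : MemLp (fun x => ((wcDeriv μ w φ x ^ ((1 - α) / 2)).toReal : ℂ) * f x) 2 μ := by
      refine (memLp_two_iff μ (show AEStronglyMeasurable
        (fun x => ((wcDeriv μ w φ x ^ ((1 - α) / 2)).toReal : ℂ) * f x) μ from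
        hmeas2.aestronglyMeasurable.mul hf.1)).2 ?_
      refine lt_of_le_of_lt (lintegral_mono fun x => ?_) hbound
      rw [wc_nsq _ ENNReal.toReal_nonneg]
      calc (ENNReal.ofReal ((wcDeriv μ w φ x ^ ((1 - α)/2)).toReal)) ^ 2 * (‖f x‖₊:ℝ≥0∞) ^ 2
          ≤ (wcDeriv μ w φ x ^ ((1 - α)/2)) ^ 2 * (‖f x‖₊:ℝ≥0∞) ^ 2 := by
            gcongr
            exact ENNReal.ofReal_toReal_le
        _ = wcDeriv μ w φ x ^ ((1 - α) : ℝ) * (‖f x‖₊:ℝ≥0∞) ^ 2 := by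
            rw [wc_rpow_sq, show 2 * ((1-α)/2) = (1 - α : ℝ) by ring]
        _ ≤ (1 + wcDeriv μ w φ x) * (‖f x‖₊:ℝ≥0∞) ^ 2 := by
            gcongr
            exact wc_rpow_le_one_add _ (by linarith) (by linarith)
    have hmeas3 : Measurable fun x => (((wcDeriv μ w φ (φ x) ^ (-(α/2) : ℝ)).toReal : ℝ) : ℂ) :=
      Complex.measurable_ofReal.comp
        ((((measurable_wcDeriv μ w φ).comp hφ).pow measurable_const).ennreal_toReal)
    have he3 : (fun x => wcTilde μ w φ x *
          (((wcDeriv μ w φ (φ x)) ^ ((1 - α) / 2)).toReal : ℂ) * f (φ x))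
        = fun x => (((wcDeriv μ w φ (φ x) ^ (-(α/2) : ℝ)).toReal : ℂ)) * (w x * f (φ x)) :=
      funext fun x => wc_cf3 μ w φ hαmem f x
    have hG3 : AEMeasurable (fun y => wcDeriv μ w φ y ^ (-α : ℝ) * (‖f y‖₊:ℝ≥0∞) ^ 2) μ :=
      (((measurable_wcDeriv μ w φ).pow measurable_const).aemeasurable.mul hfm)
    have hkey : ∀ᵐ x ∂μ,
        (ENNReal.ofReal ((wcDeriv μ w φ (φ x) ^ (-(α/2):ℝ)).toReal)) ^ 2 *
            (‖w x * f (φ x)‖₊:ℝ≥0∞) ^ 2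
          = (‖w x‖₊:ℝ≥0∞) ^ 2 *
            (wcDeriv μ w φ (φ x) ^ (-α : ℝ) * (‖f (φ x)‖₊:ℝ≥0∞) ^ 2) := by
      filter_upwards [hgen] with x hx
      by_cases hwx : w x = 0
      · simp [hwx]
      · obtain ⟨hb0x, hbtx, _⟩ := hx hwx
        rw [ENNReal.ofReal_toReal (by simp [ENNReal.rpow_eq_top_iff, hb0x, hbtx]),
          wc_rpow_sq, show 2 * (-(α/2)) = (-α : ℝ) by ring, nnnorm_mul]
        push_cast
        ring
    have hd3 : MemLp (fun x => wcTilde μ w φ x *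
        (((wcDeriv μ w φ (φ x)) ^ ((1 - α) / 2)).toReal : ℂ) * f (φ x)) 2 μ := by
      rw [he3]
      refine (memLp_two_iff μ (show AEStronglyMeasurable
        (fun x => (((wcDeriv μ w φ (φ x) ^ (-(α/2) : ℝ)).toReal : ℂ)) * (w x * f (φ x))) μ from
        hmeas3.aestronglyMeasurable.mul hwf.1)).2 ?_
      have hcalc : ∫⁻ x, (‖(((wcDeriv μ w φ (φ x) ^ (-(α/2):ℝ)).toReal : ℂ)) *
            (w x * f (φ x))‖₊:ℝ≥0∞) ^ 2 ∂μ
          = ∫⁻ x, wcDeriv μ w φ x *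
            (wcDeriv μ w φ x ^ (-α:ℝ) * (‖f x‖₊:ℝ≥0∞) ^ 2) ∂μ := by
        rw [← wc_change μ hw hφ habs hG3]
        refine lintegral_congr_ae ?_
        filter_upwards [hkey] with x hx
        rw [wc_nsq _ ENNReal.toReal_nonneg, hx]
      rw [hcalc]
      refine lt_of_le_of_lt ?_ hbound
      refine lintegral_mono_ae ?_
      filter_upwards [hfin] with x hx
      rcases eq_or_ne (wcDeriv μ w φ x) 0 with h0 | h0
      · simp [h0]
      · have hrw : wcDeriv μ w φ x * (wcDeriv μ w φ x ^ (-α:ℝ) * (‖f x‖₊:ℝ≥0∞) ^ 2)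
            = wcDeriv μ w φ x ^ ((1:ℝ) + -α) * (‖f x‖₊:ℝ≥0∞) ^ 2 := by
          rw [ENNReal.rpow_add _ _ h0 hx.ne, ENNReal.rpow_one]
          ring
        rw [hrw]
        exact mul_le_mul_left
          (wc_rpow_le_one_add _ (by linarith) (by linarith)) _
    exact ⟨hf, hd2, hd3, hwf.ae_eq (hact f).symm⟩
  · -- the Aluthge transform fixed implies quasinormality
    rintro ⟨hdom, hact⟩
    set S : ℕ → Set X := fun n => spanningSets μ n ∩ {x | wcDeriv μ w φ x ≤ n} with hS_def
    have hS : ∀ n, MeasurableSet (S n) := fun n =>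
      (measurableSet_spanningSets μ n).inter (measurable_wcDeriv μ w φ measurableSet_Iic)
    set fn : ℕ → X → ℂ := fun n => (S n).indicator (fun _ => (1:ℂ)) with hfn_def
    have hdomn : ∀ n, aluthgeDom μ w φ α (fn n) := by
      intro n
      refine (hdom (fn n)).2 ⟨?_, ?_⟩
      · exact memLp_indicator_const 2 (hS n) (1:ℂ)
          (Or.inr (lt_of_le_of_lt (measure_mono Set.inter_subset_left)
            (measure_spanningSets_lt_top μ n)).ne)
      · have hrw : (fun x => w x * fn n (φ x)) = (φ ⁻¹' S n).indicator w := by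
          funext x
          by_cases hx : φ x ∈ S n
          · simp [hfn_def, Set.indicator_of_mem, hx]
          · simp [hfn_def, Set.indicator_of_notMem, hx]
        rw [hrw]
        refine (memLp_two_iff μ ((hw.indicator (hφ (hS n))).aestronglyMeasurable)).2 ?_
        have h1 : ∫⁻ x, (‖(φ ⁻¹' S n).indicator w x‖₊:ℝ≥0∞) ^ 2 ∂μ
            = ∫⁻ x in S n, wcDeriv μ w φ x ∂μ := by
          calc ∫⁻ x, (‖(φ ⁻¹' S n).indicator w x‖₊:ℝ≥0∞) ^ 2 ∂μ
              = ∫⁻ x, (φ ⁻¹' S n).indicator (fun x => (‖w x‖₊:ℝ≥0∞) ^ 2) x ∂μ :=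
                lintegral_congr fun x => by
                  by_cases hx : x ∈ φ ⁻¹' S n <;> simp [hx]
            _ = ∫⁻ x in φ ⁻¹' S n, (‖w x‖₊:ℝ≥0∞) ^ 2 ∂μ := lintegral_indicator (hφ (hS n)) _
            _ = wcMeasure μ w (φ ⁻¹' S n) := by
                rw [wcMeasure, withDensity_apply _ (hφ (hS n))]
            _ = ∫⁻ x in S n, wcDeriv μ w φ x ∂μ := wc_measure_preimage μ hφ habs (hS n)
        rw [h1]
        calc ∫⁻ x in S n, wcDeriv μ w φ x ∂μ
            ≤ ∫⁻ _ in S n, (n:ℝ≥0∞) ∂μ :=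
              setLIntegral_mono' (hS n) fun x hx => hx.2
          _ = (n:ℝ≥0∞) * μ (S n) := setLIntegral_const _ _
          _ < ⊤ := ENNReal.mul_lt_top (ENNReal.natCast_lt_top n)
              (lt_of_le_of_lt (measure_mono Set.inter_subset_left)
                (measure_spanningSets_lt_top μ n))
    have hall : ∀ᵐ x ∂wcMeasure μ w,
        ∀ n, aluthgeFun μ w φ α (fn n) x = w x * fn n (φ x) := by
      rw [ae_all_iff]
      exact fun n => (hact (fn n) (hdomn n)).filter_mono hmac.ae_le
    have hwne : ∀ᵐ x ∂wcMeasure μ w, w x ≠ 0 :=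
      (ae_wc_iff μ hw).2 (ae_of_all _ fun x hx => hx)
    filter_upwards [hall, hb0, hbt, hwne] with x hx hb0x hbtx hwx
    obtain ⟨n₁, hn₁⟩ : ∃ n, φ x ∈ spanningSets μ n := by
      have : φ x ∈ ⋃ n, spanningSets μ n := by
        rw [iUnion_spanningSets]; trivial
      exact Set.mem_iUnion.1 this
    obtain ⟨n₂, hn₂⟩ : ∃ n : ℕ, wcDeriv μ w φ (φ x) < n :=
      ENNReal.exists_nat_gt hbtx
    have hmem : φ x ∈ S (max n₁ n₂) := by
      refine ⟨monotone_spanningSets μ (le_max_left _ _) hn₁, ?_⟩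
      refine le_trans hn₂.le ?_
      exact_mod_cast Nat.cast_le.2 (le_max_right n₁ n₂)
    have hthis := hx (max n₁ n₂)
    rw [wc_cf μ w φ hαmem _ x] at hthis
    have hone : fn (max n₁ n₂) (φ x) = 1 := Set.indicator_of_mem hmem _
    rw [hone, mul_one] at hthis
    -- hthis : c₁ * (c₂ * w x) = w x
    have h4 : (((wcDeriv μ w φ x ^ (α/2)).toReal : ℂ) *
        ((wcDeriv μ w φ (φ x) ^ (-(α/2):ℝ)).toReal : ℂ)) * w x = 1 * w x := by
      rw [mul_assoc, hthis, one_mul]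
    have h5 := mul_right_cancel₀ hwx h4
    have hsc : ((wcDeriv μ w φ x ^ (α/2)).toReal *
        (wcDeriv μ w φ (φ x) ^ (-(α/2):ℝ)).toReal : ℝ) = 1 := by
      exact_mod_cast h5
    have h1 : wcDeriv μ w φ x ^ (α/2) * wcDeriv μ w φ (φ x) ^ (-(α/2):ℝ) = 1 := by
      rw [← ENNReal.toReal_eq_one_iff, ENNReal.toReal_mul]
      exact hsc
    have hbr0 : wcDeriv μ w φ (φ x) ^ (α/2) ≠ 0 := by
      simp [ENNReal.rpow_eq_zero_iff, hb0x, hbtx]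
    have hbrt : wcDeriv μ w φ (φ x) ^ (α/2) ≠ ⊤ := by
      simp [ENNReal.rpow_eq_top_iff, hb0x, hbtx]
    rw [ENNReal.rpow_neg] at h1
    have heq2 : wcDeriv μ w φ x ^ (α/2) = wcDeriv μ w φ (φ x) ^ (α/2) := by
      calc wcDeriv μ w φ x ^ (α/2)
          = wcDeriv μ w φ x ^ (α/2) *
            ((wcDeriv μ w φ (φ x) ^ (α/2))⁻¹ * wcDeriv μ w φ (φ x) ^ (α/2)) := by
            rw [ENNReal.inv_mul_cancel hbr0 hbrt, mul_one]
        _ = (wcDeriv μ w φ x ^ (α/2) * (wcDeriv μ w φ (φ x) ^ (α/2))⁻¹) *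
            wcDeriv μ w φ (φ x) ^ (α/2) := by ring
        _ = wcDeriv μ w φ (φ x) ^ (α/2) := by rw [h1, one_mul]
    exact (ENNReal.rpow_left_injective (ne_of_gt (by linarith : (0:ℝ) < α/2)) heq2).symm
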